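/- For real numbers SNR1 > 0, INR12 ≥ 1 and ρ ∈ [0,1], log₂(1 + SNR1 + INR12 + 2√(SNR1·INR12)) − log₂(1 + SNR1 + INR12 + 2ρ√(SNR1·INR12)) + 1 ≤ log₂ 6. -/
import Mathlib


open Real

/-- Key estimate in Lemma 15: the deviation gain is at most log₂ 6. -/
theorem deviation_gain_le_log2_six (SNR1 INR12 ρ : ℝ)
    (hS : 0 < SNR1) (hI : 1 ≤ INR12) (hρ0 : 0 ≤ ρ) (hρ1 : ρ ≤ 1) :
    logb 2 (1 + SNR1 + INR12 + 2 * Real.sqrt (SNR1 * INR12)) -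
      logb 2 (1 + SNR1 + INR12 + 2 * ρ * Real.sqrt (SNR1 * INR12)) + 1 ≤
    logb 2 6 := by
  have hI0 : (0:ℝ) < INR12 := lt_of_lt_of_le one_pos hI
  have hsq : Real.sqrt (SNR1 * INR12) ^ 2 = SNR1 * INR12 :=
    Real.sq_sqrt (by positivity)
  have hs0 : 0 ≤ Real.sqrt (SNR1 * INR12) := Real.sqrt_nonneg _
  -- AM-GM: 2√(SI) ≤ S + I
  have hamgm : 2 * Real.sqrt (SNR1 * INR12) ≤ SNR1 + INR12 := by
    nlinarith [sq_nonneg (Real.sqrt SNR1 - Real.sqrt INR12),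
      Real.sq_sqrt hS.le, Real.sq_sqrt hI0.le,
      Real.sqrt_mul hS.le INR12, Real.sqrt_nonneg SNR1, Real.sqrt_nonneg INR12]
  set A := 1 + SNR1 + INR12 + 2 * Real.sqrt (SNR1 * INR12) with hA
  set B := 1 + SNR1 + INR12 + 2 * ρ * Real.sqrt (SNR1 * INR12) with hB
  have hB0 : (0:ℝ) < B := by positivity
  have hAB : A ≤ 2 * B := by
    have : 0 ≤ ρ * Real.sqrt (SNR1 * INR12) := by positivity
    nlinarith
  have h1 : logb 2 A ≤ logb 2 (2 * B) := by
    have hA0 : (0:ℝ) < A := by positivity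
    exact Real.logb_le_logb_of_le (by norm_num) hA0 hAB
  have h2 : logb 2 (2 * B) = 1 + logb 2 B := by
    rw [Real.logb_mul (by norm_num) hB0.ne', Real.logb_self_eq_one] <;> norm_num
  have h3 : (2:ℝ) ≤ logb 2 6 := by
    have : logb 2 4 ≤ logb 2 6 := Real.logb_le_logb_of_le (by norm_num) (by norm_num) (by norm_num)
    have h4 : logb 2 4 = 2 := by
      rw [show (4:ℝ) = 2^(2:ℕ) by norm_num, Real.logb_pow]
      simp [Real.logb_self_eq_one]
    linarith
  linarith [h1, h2.le]
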